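/- Let (H_n) be the PLRS with all-positive coefficients [c_1,...,c_L] (each c_i ≥ 1). Then (H_n) is complete if and only if c_1 = c_2 = ... = c_{L-1} = 1 and c_L ∈ {1, 2}. -/

import Mathlib

/-- A sequence of positive integers (indexed from 1) is complete if every positive
integer is a sum of distinct terms (each index used at most once). -/
def SeqComplete (a : ℕ → ℕ) : Prop :=
  ∀ N : ℕ, 0 < N → ∃ s : Finset ℕ, (∀ i ∈ s, 1 ≤ i) ∧ ∑ i ∈ s, a i = N

/-- `H` is the positive linear recurrence sequence (PLRS) with coefficients
`c 1, …, c L` (indexed from 1). -/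
def IsPLRS (L : ℕ) (c : ℕ → ℕ) (H : ℕ → ℕ) : Prop :=
  H 1 = 1 ∧
  (∀ n, 1 ≤ n → n < L → H (n + 1) = (∑ i ∈ Finset.Icc 1 n, c i * H (n + 1 - i)) + 1) ∧
  (∀ n, L ≤ n → H (n + 1) = ∑ i ∈ Finset.Icc 1 L, c i * H (n + 1 - i))

namespace PLRSProof

/-- Partial sums `H 1 + ⋯ + H n`. -/
def S (H : ℕ → ℕ) (n : ℕ) : ℕ := ∑ i ∈ Finset.Icc 1 n, H i

lemma reflect (f : ℕ → ℕ) (k n : ℕ) (hkn : k ≤ n) :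
    ∑ i ∈ Finset.Icc 1 k, f (n + 1 - i) = ∑ j ∈ Finset.Icc (n + 1 - k) n, f j := by
  refine Finset.sum_nbij' (fun i => n + 1 - i) (fun j => n + 1 - j) ?_ ?_ ?_ ?_ ?_
  · intro a ha; simp only [Finset.mem_Icc] at ha ⊢; omega
  · intro a ha; simp only [Finset.mem_Icc] at ha ⊢; omega
  · intro a ha; simp only [Finset.mem_Icc] at ha; show n + 1 - (n + 1 - a) = a; omega
  · intro a ha; simp only [Finset.mem_Icc] at ha; show n + 1 - (n + 1 - a) = a; omega
  · intro a ha; rfl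

lemma S_split (H : ℕ → ℕ) {m n : ℕ} (hmn : m ≤ n) :
    S H m + ∑ j ∈ Finset.Icc (m + 1) n, H j = S H n := by
  have e : ∀ a b : ℕ, Finset.Icc (a + 1) b = Finset.Ioc a b := by
    intro a b; ext x; simp only [Finset.mem_Icc, Finset.mem_Ioc]; omega
  have e0 : ∀ b : ℕ, Finset.Icc 1 b = Finset.Ioc 0 b := fun b => e 0 b
  unfold S
  rw [e0, e0, e]
  exact Finset.sum_Ioc_consecutive H (Nat.zero_le m) hmn

lemma S_succ (H : ℕ → ℕ) (n : ℕ) : S H (n + 1) = S H n + H (n + 1) := by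
  have := S_split H (show n ≤ n + 1 by omega)
  rw [Finset.Icc_self, Finset.sum_singleton] at this
  omega

section

variable {L : ℕ} {c : ℕ → ℕ} {H : ℕ → ℕ}

lemma mono (hL : 1 ≤ L) (hc : ∀ i, 1 ≤ i → i ≤ L → 1 ≤ c i) (h : IsPLRS L c H) :
    ∀ n, 1 ≤ n → H n ≤ H (n + 1) := by
  obtain ⟨h1, h2, h3⟩ := h
  intro n hn
  have key : ∀ k, 1 ≤ k → k ≤ L → n + 1 - 1 = n →
      c 1 * H n ≤ ∑ i ∈ Finset.Icc 1 k, c i * H (n + 1 - i) := by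
    intro k hk hkL hnn
    have h1m : (1 : ℕ) ∈ Finset.Icc 1 k := by simp [Finset.mem_Icc]; omega
    have := Finset.single_le_sum (f := fun i => c i * H (n + 1 - i))
      (fun i _ => Nat.zero_le _) h1m
    simpa [hnn] using this
  have hc1 : 1 ≤ c 1 := hc 1 le_rfl hL
  have hbase : H n ≤ c 1 * H n := Nat.le_mul_of_pos_left _ hc1
  rcases lt_or_ge n L with hlt | hge
  · rw [h2 n hn hlt]
    have hk := key n hn (le_of_lt hlt) (by omega)
    exact le_trans hbase (le_trans hk (Nat.le_succ _))
  · rw [h3 n hge]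
    have hk := key L hL le_rfl (by omega)
    exact le_trans hbase hk

lemma Hmono (hL : 1 ≤ L) (hc : ∀ i, 1 ≤ i → i ≤ L → 1 ≤ c i) (h : IsPLRS L c H) :
    ∀ m n, 1 ≤ m → m ≤ n → H m ≤ H n := by
  intro m n hm hmn
  induction n, hmn using Nat.le_induction with
  | base => exact le_rfl
  | succ n hmn ih => exact le_trans ih (mono hL hc h n (le_trans hm hmn))

lemma Hpos (hL : 1 ≤ L) (hc : ∀ i, 1 ≤ i → i ≤ L → 1 ≤ c i) (h : IsPLRS L c H) :
    ∀ n, 1 ≤ n → 1 ≤ H n := by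
  intro n hn
  have h1 : H 1 = 1 := h.1
  have := Hmono hL hc h 1 n le_rfl hn
  omega

/-- If all the coefficients up to `n < L` equal 1, the recurrence gives
`H (n+1) = S n + 1`. -/
lemma step_eq (h : IsPLRS L c H) {n : ℕ} (hn : 1 ≤ n) (hnL : n < L)
    (hone : ∀ i, 1 ≤ i → i ≤ n → c i = 1) :
    H (n + 1) = S H n + 1 := by
  obtain ⟨h1, h2, h3⟩ := h
  rw [h2 n hn hnL]
  congr 1
  have : ∑ i ∈ Finset.Icc 1 n, c i * H (n + 1 - i)
      = ∑ i ∈ Finset.Icc 1 n, H (n + 1 - i) := by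
    refine Finset.sum_congr rfl ?_
    intro i hi
    simp only [Finset.mem_Icc] at hi
    rw [hone i hi.1 hi.2, one_mul]
  rw [this, reflect H n n le_rfl]
  simp [S]

/-- Brown's criterion inequality holds when the coefficients are good. -/
lemma brown (hL : 1 ≤ L) (hc : ∀ i, 1 ≤ i → i ≤ L → 1 ≤ c i) (h : IsPLRS L c H)
    (hone : ∀ i, 1 ≤ i → i < L → c i = 1) (h2L : c L ≤ 2) :
    ∀ n, H (n + 1) ≤ 1 + S H n := by
  intro n
  induction n using Nat.strong_induction_on with
  | _ n ih =>
    rcases Nat.eq_zero_or_pos n with rfl | hn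
    · simp [S, h.1]
    rcases lt_or_ge n L with hlt | hge
    · rw [step_eq h hn hlt (fun i hi hin => hone i hi (lt_of_le_of_lt hin hlt))]
      omega
    · obtain ⟨K, rfl⟩ : ∃ K, L = K + 1 := ⟨L - 1, by omega⟩
      obtain ⟨h1, h2, h3⟩ := h
      have hKn : K ≤ n := by omega
      have hsum : ∑ i ∈ Finset.Icc 1 K, c i * H (n + 1 - i)
          = ∑ j ∈ Finset.Icc (n - K + 1) n, H j := by
        have e1 : ∑ i ∈ Finset.Icc 1 K, c i * H (n + 1 - i)
            = ∑ i ∈ Finset.Icc 1 K, H (n + 1 - i) := by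
          refine Finset.sum_congr rfl ?_
          intro i hi
          simp only [Finset.mem_Icc] at hi
          rw [hone i hi.1 (by omega), one_mul]
        have e2 : Finset.Icc (n + 1 - K) n = Finset.Icc (n - K + 1) n := by
          ext x; simp only [Finset.mem_Icc]; omega
        rw [e1, reflect H K n hKn, e2]
      rw [h3 n hge, Finset.sum_Icc_succ_top (by omega : 1 ≤ K + 1), hsum,
        show n + 1 - (K + 1) = n - K by omega]
      have hsplit : S H (n - K) + ∑ j ∈ Finset.Icc (n - K + 1) n, H j = S H n :=
        S_split H (by omega)
      have hIH : H (n - K) ≤ 1 + S H (n - K - 1) := by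
        have := ih (n - K - 1) (by omega)
        rwa [show n - K - 1 + 1 = n - K by omega] at this
      have hSm : S H (n - K) = S H (n - K - 1) + H (n - K) := by
        have := S_succ H (n - K - 1)
        rw [show n - K - 1 + 1 = n - K by omega] at this
        omega
      obtain ⟨q, hq⟩ : ∃ q, c (K + 1) * H (n - K) = q := ⟨_, rfl⟩
      rw [hq]
      have hq2 : q ≤ 2 * H (n - K) := by
        rw [← hq]
        exact Nat.mul_le_mul_right _ h2L
      omega

/-- Every `N` with `1 ≤ N ≤ S n` is a sum of distinct terms with indices in `[1, n]`. -/
lemma rep (hL : 1 ≤ L) (hc : ∀ i, 1 ≤ i → i ≤ L → 1 ≤ c i) (h : IsPLRS L c H)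
    (hb : ∀ n, H (n + 1) ≤ 1 + S H n) :
    ∀ n N, 1 ≤ N → N ≤ S H n → ∃ s : Finset ℕ, s ⊆ Finset.Icc 1 n ∧ ∑ i ∈ s, H i = N := by
  intro n
  induction n with
  | zero =>
    intro N hN hNS
    have h0 : S H 0 = 0 := by
      unfold S
      rw [Finset.Icc_eq_empty (by omega)]
      simp
    omega
  | succ n ih =>
    intro N hN hNS
    rcases le_or_gt N (S H n) with hle | hgt
    · obtain ⟨s, hs, hsum⟩ := ih N hN hle
      exact ⟨s, hs.trans (Finset.Icc_subset_Icc_right (by omega)), hsum⟩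
    · have hHN : H (n + 1) ≤ N := by have := hb n; omega
      have hSn1 : S H (n + 1) = S H n + H (n + 1) := S_succ H n
      rcases Nat.eq_or_lt_of_le hHN with heq | hlt
      · refine ⟨{n + 1}, ?_, by simpa using heq⟩
        intro x hx
        simp only [Finset.mem_singleton] at hx
        simp [hx, Finset.mem_Icc]
      · obtain ⟨t, ht, htsum⟩ := ih (N - H (n + 1)) (by omega) (by omega)
        have hnot : n + 1 ∉ t := by
          intro hmem
          have := ht hmem
          simp only [Finset.mem_Icc] at this
          omega
        refine ⟨insert (n + 1) t, ?_, ?_⟩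
        · intro x hx
          rcases Finset.mem_insert.mp hx with rfl | hx
          · simp [Finset.mem_Icc]
          · have := ht hx
            simp only [Finset.mem_Icc] at this ⊢
            omega
        · rw [Finset.sum_insert hnot, htsum]
          omega

end

end PLRSProof

open PLRSProof

theorem plrs_positive_coeffs_complete_iff (L : ℕ) (hL : 1 ≤ L) (c : ℕ → ℕ)
    (hc : ∀ i, 1 ≤ i → i ≤ L → 1 ≤ c i) (H : ℕ → ℕ) (h : IsPLRS L c H) :
    SeqComplete H ↔ (∀ i, 1 ≤ i → i < L → c i = 1) ∧ (c L = 1 ∨ c L = 2) := by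
  constructor
  · -- completeness implies good coefficients
    intro hcomp
    by_contra hbad
    -- find a minimal bad index j
    have hex : ∃ j, 1 ≤ j ∧ j ≤ L ∧ ((j < L ∧ 2 ≤ c j) ∨ (j = L ∧ 3 ≤ c j)) := by
      by_cases hA : ∀ i, 1 ≤ i → i < L → c i = 1
      · have hcL : ¬(c L = 1 ∨ c L = 2) := fun hOr => hbad ⟨hA, hOr⟩
        have : 3 ≤ c L := by
          have := hc L hL le_rfl
          omega
        exact ⟨L, hL, le_rfl, Or.inr ⟨rfl, this⟩⟩
      · push_neg at hA
        obtain ⟨i, hi1, hiL, hine⟩ := hA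
        have : 2 ≤ c i := by have := hc i hi1 (le_of_lt hiL); omega
        exact ⟨i, hi1, le_of_lt hiL, Or.inl ⟨hiL, this⟩⟩
    classical
    obtain ⟨j, ⟨hj1, hjL, hjbad⟩, hminj⟩ :
        ∃ j, (1 ≤ j ∧ j ≤ L ∧ (j < L ∧ 2 ≤ c j ∨ j = L ∧ 3 ≤ c j)) ∧
          ∀ i, i < j → ¬(1 ≤ i ∧ i ≤ L ∧ (i < L ∧ 2 ≤ c i ∨ i = L ∧ 3 ≤ c i)) :=
      ⟨Nat.find hex, Nat.find_spec hex, fun i hi => Nat.find_min hex hi⟩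
    have hmin : ∀ i, 1 ≤ i → i < j → c i = 1 := by
      intro i hi1 hij
      have hnb := hminj i hij
      have hiL : i < L := by omega
      have : ¬(2 ≤ c i) := by
        intro h2
        exact hnb ⟨hi1, le_of_lt hiL, Or.inl ⟨hiL, h2⟩⟩
      have := hc i hi1 (le_of_lt hiL)
      omega
    -- H (m+1) = S m + 1 for 1 ≤ m < j
    have Heq : ∀ m, 1 ≤ m → m < j → H (m + 1) = S H m + 1 := by
      intro m hm hmj
      exact step_eq h hm (by omega) (fun i hi him => hmin i hi (by omega))
    -- key: H (j+1) ≥ S j + 2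
    have hkey : S H j + 2 ≤ H (j + 1) := by
      obtain ⟨K, rfl⟩ : ∃ K, j = K + 1 := ⟨j - 1, by omega⟩
      have hsum1 : ∑ i ∈ Finset.Icc 1 K, c i * H (K + 1 + 1 - i)
          = ∑ x ∈ Finset.Icc 2 (K + 1), H x := by
        have e1 : ∑ i ∈ Finset.Icc 1 K, c i * H (K + 1 + 1 - i)
            = ∑ i ∈ Finset.Icc 1 K, H (K + 1 + 1 - i) := by
          refine Finset.sum_congr rfl ?_
          intro i hi
          simp only [Finset.mem_Icc] at hi
          rw [hmin i hi.1 (by omega), one_mul]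
        have e2 : Finset.Icc (K + 1 + 1 - K) (K + 1) = Finset.Icc 2 (K + 1) := by
          ext x; simp only [Finset.mem_Icc]; omega
        rw [e1, reflect H K (K + 1) (by omega), e2]
      have hS1 : S H 1 = 1 := by simp [S, h.1]
      have hSsplit : S H 1 + ∑ x ∈ Finset.Icc 2 (K + 1), H x = S H (K + 1) :=
        S_split H (by omega)
      have hH1 : H 1 = 1 := h.1
      rcases hjbad with ⟨hjlt, hcj⟩ | ⟨hjeq, hcj⟩
      · -- j < L, uses the first recurrence
        have := h.2.1 (K + 1) (by omega) hjlt
        rw [Finset.sum_Icc_succ_top (by omega : 1 ≤ K + 1), hsum1] at this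
        rw [show K + 1 + 1 - (K + 1) = 1 by omega, hH1] at this
        omega
      · -- j = L, uses the second recurrence
        have := h.2.2 (K + 1) (le_of_eq hjeq.symm)
        rw [← hjeq] at this
        rw [Finset.sum_Icc_succ_top (by omega : 1 ≤ K + 1), hsum1] at this
        rw [show K + 1 + 1 - (K + 1) = 1 by omega, hH1] at this
        omega
    -- N = S j + 1 is not representable
    obtain ⟨s, hs1, hsum⟩ := hcomp (S H j + 1) (by omega)
    by_cases hall : ∀ i ∈ s, i ≤ j
    · have hsub : s ⊆ Finset.Icc 1 j := by
        intro x hx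
        simp only [Finset.mem_Icc]
        exact ⟨hs1 x hx, hall x hx⟩
      have : ∑ i ∈ s, H i ≤ S H j :=
        Finset.sum_le_sum_of_subset hsub
      omega
    · push_neg at hall
      obtain ⟨m, hms, hmj⟩ := hall
      have h1 : H m ≤ ∑ i ∈ s, H i :=
        Finset.single_le_sum (fun i _ => Nat.zero_le _) hms
      have h2 : H (j + 1) ≤ H m := Hmono hL hc h (j + 1) m (by omega) (by omega)
      omega
  · -- good coefficients imply completeness
    rintro ⟨hone, hcL⟩
    have hb : ∀ n, H (n + 1) ≤ 1 + S H n :=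
      brown hL hc h hone (by omega)
    intro N hN
    have hSN : N ≤ S H N := by
      have : ∀ i ∈ Finset.Icc 1 N, 1 ≤ H i := by
        intro i hi
        simp only [Finset.mem_Icc] at hi
        exact Hpos hL hc h i hi.1
      calc N = ∑ _i ∈ Finset.Icc 1 N, 1 := by simp
        _ ≤ ∑ i ∈ Finset.Icc 1 N, H i := Finset.sum_le_sum this
    obtain ⟨s, hsub, hsum⟩ := rep hL hc h hb N N hN hSN
    refine ⟨s, ?_, hsum⟩
    intro i hi
    have := hsub hi
    simp only [Finset.mem_Icc] at this
    exact this.1
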